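/- Let G be a group, 𝔐 a covariant coefficient system for G over a ring R, S a G-set, s ∈ S, and g ∈ G. Then the R-linear map 𝔐(G/G_s^g) → 𝔐[s] given by x ↦ [x ⊗ gs] is an isomorphism. -/

import Mathlib

noncomputable section

universe u v w

/-- A covariant `R`-coefficient system for `G`: a covariant functor from the
category of canonical `G`-orbits (coset spaces `G/H` with `G`-equivariant maps)
to the category of left `R`-modules and linear maps. -/
structure CoeffSystem (G : Type u) [Group G] (R : Type v) [Ring R] where
  obj : Subgroup G → ModuleCat.{v} R
  map : ∀ {H K : Subgroup G} (f : G ⧸ H → G ⧸ K),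
      (∀ (g : G) (x : G ⧸ H), f (g • x) = g • f x) → (obj H →ₗ[R] obj K)
  map_id : ∀ (H : Subgroup G) (hf : ∀ (g : G) (x : G ⧸ H), id (g • x) = g • id x),
      map id hf = LinearMap.id
  map_comp : ∀ {H K L : Subgroup G} (f : G ⧸ H → G ⧸ K) (f' : G ⧸ K → G ⧸ L)
      (hf : ∀ (g : G) x, f (g • x) = g • f x) (hf' : ∀ (g : G) x, f' (g • x) = g • f' x)
      (hff' : ∀ (g : G) x, (f' ∘ f) (g • x) = g • (f' ∘ f) x),
      map (f' ∘ f) hff' = (map f' hf').comp (map f hf)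

variable {G : Type u} [Group G] {R : Type v} [Ring R]
variable {S : Type w} [MulAction G S]

/-- `μ(g, G_s)` transported along the identification of `G/G_s^g` with
`G/G_{g•s}`: the equivariant map `G ⧸ stab(g • s) → G ⧸ stab s`, `x·stab(g•s) ↦ xg·stab s`. -/
def muBar (g : G) (s : S) :
    G ⧸ MulAction.stabilizer G (g • s) → G ⧸ MulAction.stabilizer G s :=
  Quotient.map' (· * g) (fun a b hab => by
    rw [QuotientGroup.leftRel_apply] at hab ⊢
    rw [MulAction.mem_stabilizer_iff] at hab ⊢
    have e : (a * g)⁻¹ * (b * g) = g⁻¹ * (a⁻¹ * b) * g := by group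
    rw [e, mul_smul, mul_smul, hab, inv_smul_smul])

theorem muBar_equivariant (g : G) (s : S) :
    ∀ (g' : G) (x : G ⧸ MulAction.stabilizer G (g • s)),
      muBar g s (g' • x) = g' • muBar g s x := by
  intro g' x
  refine Quotient.inductionOn' x fun a => ?_
  show muBar g s (QuotientGroup.mk (g' * a)) = QuotientGroup.mk (g' * (a * g))
  show QuotientGroup.mk ((g' * a) * g) = QuotientGroup.mk (g' * (a * g))
  rw [mul_assoc]

open DirectSum

/-- The ambient module `⨁_{t ∈ Gs} 𝔐(G/G_t) ⊗ R{t}` of the orbit module construction: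
the direct sum over the points `t = gs` of the orbit of `s` (equivalently over the
cosets `gG_s ∈ G/G_s`) of the modules `𝔐(G/G_s^g) = 𝔐(G/G_t)`. -/
abbrev OrbitAmbient (M : CoeffSystem G R) (s : S) : Type _ :=
  ⨁ (t : MulAction.orbit G s), M.obj (MulAction.stabilizer G t.val)

instance (s : S) : DecidableEq ↥(MulAction.orbit G s) := Classical.decEq _

theorem smul_mem_orbit_of_mem {s u : S} (hu : u ∈ MulAction.orbit G s) (g : G) :
    g • u ∈ MulAction.orbit G s := by
  obtain ⟨g₀, hg₀⟩ := hu
  exact ⟨g * g₀, by simp only []; rw [mul_smul]; simp only at hg₀; rw [hg₀]⟩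

/-- The submodule `J_𝔐[u]` of relations: generated by all elements
`x ⊗ gu − 𝔐(μ(g,G_u))(x) ⊗ u`, for `u` a point of the orbit of `s`. -/
def Jrel (M : CoeffSystem G R) (s : S) (u : S) (hu : u ∈ MulAction.orbit G s) :
    Submodule R (OrbitAmbient M s) :=
  Submodule.span R
    {z | ∃ (g : G) (x : M.obj (MulAction.stabilizer G (g • u))),
      z = DirectSum.of (fun t : MulAction.orbit G s => M.obj (MulAction.stabilizer G t.val))
            ⟨g • u, smul_mem_orbit_of_mem hu g⟩ x
        - DirectSum.of (fun t : MulAction.orbit G s => M.obj (MulAction.stabilizer G t.val))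
            ⟨u, hu⟩ (M.map (muBar g u) (muBar_equivariant g u) x)}

/-- The orbit module `𝔐[s]`. -/
def OrbitModule (M : CoeffSystem G R) (s : S) : Type _ :=
  OrbitAmbient M s ⧸ Jrel M s s (MulAction.mem_orbit_self s)

instance (M : CoeffSystem G R) (s : S) : AddCommGroup (OrbitModule M s) :=
  inferInstanceAs (AddCommGroup (OrbitAmbient M s ⧸ Jrel M s s (MulAction.mem_orbit_self s)))

instance (M : CoeffSystem G R) (s : S) : Module R (OrbitModule M s) :=
  inferInstanceAs (Module R (OrbitAmbient M s ⧸ Jrel M s s (MulAction.mem_orbit_self s)))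

end

noncomputable section Aux

universe u' v' w'

variable {G : Type u'} [Group G] {R : Type v'} [Ring R] {S : Type w'} [MulAction G S]

/-- The equivariant map `G ⧸ stab u → G ⧸ stab s`, `a·stab u ↦ ah·stab s`,
for any `h` with `h • s = u`. -/
def nuMap {s u : S} (h : G) (hh : h • s = u) :
    G ⧸ MulAction.stabilizer G u → G ⧸ MulAction.stabilizer G s :=
  Quotient.map' (· * h) (fun a b hab => by
    rw [QuotientGroup.leftRel_apply] at hab ⊢
    rw [MulAction.mem_stabilizer_iff] at hab ⊢
    have e : (a * h)⁻¹ * (b * h) = h⁻¹ * (a⁻¹ * b) * h := by group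
    rw [e, mul_smul, mul_smul, hh, hab, ← hh, inv_smul_smul])

theorem nuMap_equivariant {s u : S} (h : G) (hh : h • s = u) :
    ∀ (g' : G) (x : G ⧸ MulAction.stabilizer G u),
      nuMap h hh (g' • x) = g' • nuMap h hh x := by
  intro g' x
  refine Quotient.inductionOn' x fun a => ?_
  show QuotientGroup.mk ((g' * a) * h) = QuotientGroup.mk (g' * (a * h))
  rw [mul_assoc]

theorem nuMap_eq {s u : S} (h h' : G) (hh : h • s = u) (hh' : h' • s = u) :
    nuMap h hh = nuMap h' hh' := by
  funext x
  refine Quotient.inductionOn' x fun a => ?_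
  show QuotientGroup.mk (a * h) = QuotientGroup.mk (a * h')
  rw [QuotientGroup.eq]
  have e : (a * h)⁻¹ * (a * h') = h⁻¹ * h' := by group
  rw [e, MulAction.mem_stabilizer_iff, mul_smul, hh', ← hh, inv_smul_smul]

theorem nuMap_comp {s u w : S} (h h' : G) (hh : h • s = u) (hh' : h' • u = w) :
    nuMap h hh ∘ nuMap h' hh' =
      nuMap (h' * h) (by rw [mul_smul, hh, hh']) := by
  funext x
  refine Quotient.inductionOn' x fun a => ?_
  show QuotientGroup.mk ((a * h') * h) = QuotientGroup.mk (a * (h' * h))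
  rw [mul_assoc]

theorem nuMap_one (s : S) : nuMap (s := s) 1 (one_smul G s) = id := by
  funext x
  refine Quotient.inductionOn' x fun a => ?_
  show QuotientGroup.mk (a * 1) = QuotientGroup.mk a
  rw [mul_one]

theorem muBar_eq_nuMap (g : G) (s : S) : muBar g s = nuMap g rfl := rfl

theorem csMapCongr (M : CoeffSystem G R) {H K : Subgroup G} {f f' : G ⧸ H → G ⧸ K}
    (hf : ∀ (g : G) x, f (g • x) = g • f x)
    (hf' : ∀ (g : G) x, f' (g • x) = g • f' x)
    (e : f = f') : M.map f hf = M.map f' hf' := by subst e; rfl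

theorem map_cancel (M : CoeffSystem G R) {s u : S} (h h' : G) (hh : h • s = u)
    (hh' : h' • u = s) (x : M.obj (MulAction.stabilizer G u)) :
    M.map (nuMap h' hh') (nuMap_equivariant h' hh')
      (M.map (nuMap h hh) (nuMap_equivariant h hh) x) = x := by
  have hcomp : ∀ (g' : G) y, (nuMap h' hh' ∘ nuMap h hh) (g' • y) =
      g' • (nuMap h' hh' ∘ nuMap h hh) y := fun g' y => by
    simp only [Function.comp_apply, nuMap_equivariant]
  rw [← LinearMap.comp_apply,
    ← M.map_comp (nuMap h hh) (nuMap h' hh') (nuMap_equivariant h hh)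
      (nuMap_equivariant h' hh') hcomp]
  have e : nuMap h' hh' ∘ nuMap h hh = id := by
    rw [nuMap_comp h' h hh' hh,
      nuMap_eq (h * h') 1 _ (one_smul G u), nuMap_one]
  rw [csMapCongr M hcomp (fun g' y => by simp) e, M.map_id]
  rfl

/-- The retraction `⨁ 𝔐(G/G_t) → 𝔐(G/G_s)`. -/
def piMap (M : CoeffSystem G R) (s : S) :
    OrbitAmbient M s →ₗ[R] M.obj (MulAction.stabilizer G s) :=
  DirectSum.toModule R _ _ (fun t =>
    M.map (nuMap (Classical.choose t.2) (Classical.choose_spec t.2))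
      (nuMap_equivariant _ _))

theorem piMap_of (M : CoeffSystem G R) (s : S) (t : MulAction.orbit G s)
    (x : M.obj (MulAction.stabilizer G t.val)) :
    piMap M s (DirectSum.of (fun t : MulAction.orbit G s =>
        M.obj (MulAction.stabilizer G t.val)) t x) =
      M.map (nuMap (Classical.choose t.2) (Classical.choose_spec t.2))
        (nuMap_equivariant _ _) x := by
  rw [← DirectSum.lof_eq_of R, piMap, DirectSum.toModule_lof]

theorem jrel_le_ker (M : CoeffSystem G R) (s : S) :
    Jrel M s s (MulAction.mem_orbit_self s) ≤ LinearMap.ker (piMap M s) := by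
  rw [Jrel, Submodule.span_le]
  rintro z ⟨g', x, rfl⟩
  simp only [SetLike.mem_coe, LinearMap.mem_ker, map_sub]
  rw [piMap_of, piMap_of]
  set t : MulAction.orbit G s :=
    ⟨g' • s, smul_mem_orbit_of_mem (MulAction.mem_orbit_self s) g'⟩
  set t₀ : MulAction.orbit G s := ⟨s, MulAction.mem_orbit_self s⟩
  rw [csMapCongr M _ (nuMap_equivariant g' rfl)
      (nuMap_eq (Classical.choose t.2) g' (Classical.choose_spec t.2) rfl),
    csMapCongr M _ (nuMap_equivariant 1 (one_smul G s))
      (nuMap_eq (Classical.choose t₀.2) 1 (Classical.choose_spec t₀.2) (one_smul G s)),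
    csMapCongr M _ (fun g x => rfl) (nuMap_one s), M.map_id,
    csMapCongr M (muBar_equivariant g' s) (nuMap_equivariant g' rfl)
      (muBar_eq_nuMap g' s)]
  simp

/-- `piMap` descends to the orbit module. -/
def piBar (M : CoeffSystem G R) (s : S) :
    OrbitModule M s →ₗ[R] M.obj (MulAction.stabilizer G s) :=
  Submodule.liftQ _ (piMap M s) (jrel_le_ker M s)

theorem rel_mk (M : CoeffSystem G R) (s : S) (g' : G) (hp : g' • s ∈ MulAction.orbit G s)
    (x : M.obj (MulAction.stabilizer G (g' • s))) :
    (Submodule.Quotient.mk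
        (DirectSum.of (fun t : MulAction.orbit G s =>
          M.obj (MulAction.stabilizer G t.val)) ⟨g' • s, hp⟩ x) :
      OrbitModule M s) =
    Submodule.Quotient.mk
        (DirectSum.of (fun t : MulAction.orbit G s =>
          M.obj (MulAction.stabilizer G t.val)) ⟨s, MulAction.mem_orbit_self s⟩
          (M.map (muBar g' s) (muBar_equivariant g' s) x)) := by
  rw [Submodule.Quotient.eq]
  exact Submodule.subset_span ⟨g', x, rfl⟩

end Aux

/-- The `R`-linear map `𝔐(G/G_s^g) → 𝔐[s]`, `x ↦ [x ⊗ gs]`,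
is an isomorphism. -/
theorem orbitModule_component_bijective {G : Type u} [Group G] {R : Type v} [Ring R]
    {S : Type w} [MulAction G S] (M : CoeffSystem G R) (s : S) (g : G) :
    Function.Bijective (fun x : M.obj (MulAction.stabilizer G (g • s)) =>
      (Submodule.Quotient.mk
        (DirectSum.of (fun t : MulAction.orbit G s => M.obj (MulAction.stabilizer G t.val))
          ⟨g • s, smul_mem_orbit_of_mem (MulAction.mem_orbit_self s) g⟩ x) :
        OrbitModule M s)) := by
  classical
  set ν : M.obj (MulAction.stabilizer G s) →ₗ[R] M.obj (MulAction.stabilizer G (g • s)) :=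
    M.map (nuMap g⁻¹ (inv_smul_smul g s)) (nuMap_equivariant _ _) with hν
  set Ψ : OrbitModule M s →ₗ[R] M.obj (MulAction.stabilizer G (g • s)) :=
    ν.comp (piBar M s) with hΨ
  have piBar_mk : ∀ z : OrbitAmbient M s,
      piBar M s (Submodule.Quotient.mk z) = piMap M s z := fun z => rfl
  have key : ∀ x : M.obj (MulAction.stabilizer G (g • s)),
      Ψ (Submodule.Quotient.mk (DirectSum.of (fun t : MulAction.orbit G s =>
        M.obj (MulAction.stabilizer G t.val))
        ⟨g • s, smul_mem_orbit_of_mem (MulAction.mem_orbit_self s) g⟩ x)) = x := by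
    intro x
    rw [hΨ]
    change ν (piBar M s _) = x
    rw [piBar_mk, piMap_of,
      csMapCongr M _ (nuMap_equivariant g rfl) (nuMap_eq _ g _ rfl), hν]
    exact map_cancel M g g⁻¹ rfl (inv_smul_smul g s) x
  constructor
  · intro a b hab
    have h2 := congrArg Ψ hab
    simp only at h2
    rw [key, key] at h2
    exact h2
  · intro y
    refine ⟨Ψ y, ?_⟩
    simp only
    obtain ⟨z, rfl⟩ := Submodule.Quotient.mk_surjective _ y
    induction z using DirectSum.induction_on with
    | zero => erw [map_zero Ψ]; simp
    | add z1 z2 h1 h2 =>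
        have e : (Submodule.Quotient.mk (z1 + z2) : OrbitModule M s) =
            Submodule.Quotient.mk z1 + Submodule.Quotient.mk z2 := rfl
        erw [e, map_add Ψ, map_add, Submodule.Quotient.mk_add, h1, h2]
    | of t x =>
        obtain ⟨tv, gt, rfl⟩ := t
        have step1 : Ψ (Submodule.Quotient.mk (DirectSum.of
            (fun t : MulAction.orbit G s => M.obj (MulAction.stabilizer G t.val))
            ⟨gt • s, ⟨gt, rfl⟩⟩ x)) =
            ν (M.map (nuMap gt rfl) (nuMap_equivariant gt rfl) x) := by
          rw [hΨ]
          change ν (piBar M s _) = _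
          rw [piBar_mk, piMap_of,
            csMapCongr M _ (nuMap_equivariant gt rfl) (nuMap_eq _ gt _ rfl)]
        rw [step1, rel_mk M s g _ (ν (M.map (nuMap gt rfl) (nuMap_equivariant gt rfl) x)),
          rel_mk M s gt ⟨gt, rfl⟩ x,
          csMapCongr M (muBar_equivariant g s) (nuMap_equivariant g rfl) (muBar_eq_nuMap g s),
          csMapCongr M (muBar_equivariant gt s) (nuMap_equivariant gt rfl) (muBar_eq_nuMap gt s),
          hν, map_cancel M g⁻¹ g (inv_smul_smul g s) rfl]
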